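/- If G is a 2-connected graph, then a subset S of vertices is a dominating set in every spanning tree of G if and only if S is a vertex cover of G. -/

import Mathlib

open SimpleGraph

variable {V : Type*}

/-- Number of connected components of a graph. -/
noncomputable def numComponents (G : SimpleGraph V) : ℕ := Nat.card G.ConnectedComponent

/-- A vertex is a cut vertex if its removal increases the number of connected components. -/
def IsCutVertex (G : SimpleGraph V) (v : V) : Prop :=
  numComponents G < numComponents (G.induce {u | u ≠ v})

/-- `T` is a spanning tree of `G`: a subgraph on all vertices of `G` that is a tree. -/
def IsSpanningTree (G T : SimpleGraph V) : Prop := T ≤ G ∧ T.IsTree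

/-- `v` is dominated by `S` in the graph `T`. -/
def DominatedIn (T : SimpleGraph V) (S : Set V) (v : V) : Prop :=
  v ∈ S ∨ ∃ u ∈ S, T.Adj v u

/-- `v` is simultaneously dominated by `S`: dominated in every spanning tree of `G`. -/
def SimDominated (G : SimpleGraph V) (S : Set V) (v : V) : Prop :=
  ∀ T : SimpleGraph V, IsSpanningTree G T → DominatedIn T S v

/-- `S` is a simultaneous dominating set of `G`. -/
def IsSDSet (G : SimpleGraph V) (S : Set V) : Prop := ∀ v, SimDominated G S v

/-- `C` is a vertex cover of `G`. -/
def IsVertexCover (G : SimpleGraph V) (C : Set V) : Prop :=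
  ∀ ⦃u v : V⦄, G.Adj u v → u ∈ C ∨ v ∈ C

/-- A block of `G`: a maximal vertex set inducing a connected subgraph without cut vertices. -/
def IsBlock (G : SimpleGraph V) (B : Set V) : Prop :=
  B.Nonempty ∧ (G.induce B).Connected ∧ (∀ x, ¬ IsCutVertex (G.induce B) x) ∧
    ∀ B' : Set V, B ⊆ B' → (G.induce B').Connected →
      (∀ x, ¬ IsCutVertex (G.induce B') x) → B' = B

/-- 2-connected: connected, at least 3 vertices, no cut vertex. -/
def TwoConnected (G : SimpleGraph V) [Fintype V] : Prop :=
  G.Connected ∧ 3 ≤ Fintype.card V ∧ ∀ v, ¬ IsCutVertex G v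

/-- Colours 1, 0, 0̂. -/
inductive Col : Type
  | one | zero | zhat
deriving DecidableEq

/-- `S` is an `f`-respecting simultaneous dominating set of `G`. -/
def RespSDS (G : SimpleGraph V) (f : V → Col) (S : Set V) : Prop :=
  (∀ v, f v = Col.one → v ∈ S) ∧ ∀ v, f v = Col.zhat → SimDominated G S v

/-- A minimum `f`-respecting simultaneous dominating set. -/
def MinRespSDS (G : SimpleGraph V) (f : V → Col) (S : Set V) : Prop :=
  RespSDS G f S ∧ ∀ S' : Set V, RespSDS G f S' → S.ncard ≤ S'.ncard

lemma reach_of_reach {G H : SimpleGraph V} (h : ∀ a b, G.Adj a b → H.Reachable a b)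
    {x y : V} (hr : G.Reachable x y) : H.Reachable x y := by
  obtain ⟨p⟩ := hr
  induction p with
  | nil => exact Reachable.refl _
  | cons ha _ ih => exact (h _ _ ha).trans ih

lemma exists_spanning_tree [Finite V] (G : SimpleGraph V) (hc : G.Connected) :
    ∃ T : SimpleGraph V, T ≤ G ∧ T.IsTree := by
  generalize hn : G.edgeSet.ncard = n
  induction n using Nat.strong_induction_on generalizing G with
  | _ n ih =>
    by_cases hac : G.IsAcyclic
    · exact ⟨G, le_refl _, ⟨hc, hac⟩⟩
    · rw [isAcyclic_iff_forall_adj_isBridge] at hac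
      push_neg at hac
      obtain ⟨v, w, hadj, hbr⟩ := hac
      rw [isBridge_iff] at hbr
      push_neg at hbr
      have hvw : (G \ fromEdgeSet {s(v, w)}).Reachable v w := hbr
      set G' := G \ fromEdgeSet {s(v, w)} with hG'
      have hle : G' ≤ G := sdiff_le
      have hadj' : ∀ a b, G.Adj a b → G'.Reachable a b := by
        intro a b hab
        by_cases he : s(a, b) = s(v, w)
        · rw [Sym2.eq_iff] at he
          rcases he with ⟨rfl, rfl⟩ | ⟨rfl, rfl⟩
          · exact hvw
          · exact hvw.symm
        · exact Adj.reachable ⟨hab, by simp [he]⟩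
      have hc' : G'.Connected := by
        rw [connected_iff]
        exact ⟨fun a b => reach_of_reach hadj' (hc.preconnected a b), hc.nonempty⟩
      have hlt : G'.edgeSet.ncard < n := by
        rw [← hn]
        apply Set.ncard_lt_ncard _ G.edgeSet.toFinite
        constructor
        · exact edgeSet_mono hle
        · intro hsub
          have h1 : s(v, w) ∈ G'.edgeSet := hsub (hadj : s(v,w) ∈ G.edgeSet)
          rw [mem_edgeSet] at h1
          exact h1.2 (by simp [hadj.ne])
      obtain ⟨T, hT1, hT2⟩ := ih _ hlt G' hc' rfl
      exact ⟨T, hT1.trans hle, hT2⟩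

lemma induce_del_connected [Fintype V] (G : SimpleGraph V) (hc : G.Connected)
    (hcard : 3 ≤ Fintype.card V) (hcut : ∀ v, ¬ IsCutVertex G v) (u : V) :
    (G.induce {w | w ≠ u}).Connected := by
  have hne : Nonempty {w // w ∈ {w : V | w ≠ u}} := by
    obtain ⟨b, hb⟩ := Fintype.exists_ne_of_one_lt_card (by omega) u
    exact ⟨⟨b, hb⟩⟩
  have hfin : Finite (G.induce {w | w ≠ u}).ConnectedComponent :=
    Finite.of_surjective (G.induce {w | w ≠ u}).connectedComponentMk
      (fun c => c.exists_rep)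
  have h1 : numComponents G = 1 := by
    rw [numComponents, Nat.card_eq_one_iff_unique]
    refine ⟨⟨fun a b => ?_⟩, ⟨G.connectedComponentMk u⟩⟩
    obtain ⟨a, rfl⟩ := a.exists_rep
    obtain ⟨b, rfl⟩ := b.exists_rep
    exact ConnectedComponent.sound (hc.preconnected a b)
  have h2 := hcut u
  rw [IsCutVertex, h1] at h2
  push_neg at h2
  have h3 : numComponents (G.induce {w | w ≠ u}) = 1 := by
    have hne2 : Nonempty (G.induce {w | w ≠ u}).ConnectedComponent :=
      ⟨(G.induce {w | w ≠ u}).connectedComponentMk (Classical.choice hne)⟩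
    have : 0 < numComponents (G.induce {w | w ≠ u}) := Nat.card_pos
    omega
  rw [numComponents, Nat.card_eq_one_iff_unique] at h3
  obtain ⟨hsub, -⟩ := h3
  rw [connected_iff]
  refine ⟨fun a b => ?_, hne⟩
  have := hsub.allEq ((G.induce {w | w ≠ u}).connectedComponentMk a)
    ((G.induce {w | w ≠ u}).connectedComponentMk b)
  exact (ConnectedComponent.eq).1 this

/-- In a 2-connected graph, `S` is a dominating set in every spanning tree iff
`S` is a vertex cover. -/
theorem stmt3 [Fintype V] (G : SimpleGraph V) (hG : TwoConnected G) (S : Set V) :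
    IsSDSet G S ↔ _root_.IsVertexCover G S := by
  obtain ⟨hc, hcard, hcut⟩ := hG
  constructor
  · -- SD-set → vertex cover
    intro hsd u v huv
    by_contra hcon
    push_neg at hcon
    obtain ⟨hu, hv⟩ := hcon
    -- H : G minus all edges at u except uv
    set H : SimpleGraph V := {
      Adj := fun x y => G.Adj x y ∧ (s(x, y) = s(u, v) ∨ (x ≠ u ∧ y ≠ u))
      symm := by
        constructor
        rintro x y ⟨h1, h2⟩
        refine ⟨h1.symm, ?_⟩
        rcases h2 with h2 | ⟨h2, h3⟩
        · left; rw [Sym2.eq_swap]; exact h2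
        · right; exact ⟨h3, h2⟩
      loopless := ⟨fun x ⟨h1, _⟩ => G.loopless.irrefl x h1⟩ } with hH
    have hHle : H ≤ G := fun x y h => h.1
    have hHc : H.Connected := by
      have hind := induce_del_connected G hc hcard hcut u
      rw [connected_iff]
      refine ⟨fun a b => ?_, hc.nonempty⟩
      have key : ∀ x : V, H.Reachable x v := by
        intro x
        by_cases hx : x = u
        · subst hx
          exact Adj.reachable ⟨huv, Or.inl rfl⟩
        · have hr : (G.induce {w | w ≠ u}).Reachable ⟨x, hx⟩ ⟨v, huv.ne'⟩ :=
            hind.preconnected _ _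
          obtain ⟨p⟩ := hr
          let f : G.induce {w | w ≠ u} →g H :=
            ⟨Subtype.val, fun {a b} hab => ⟨hab, Or.inr ⟨a.2, b.2⟩⟩⟩
          exact ⟨p.map f⟩
      exact (key a).trans (key b).symm
    obtain ⟨T, hT1, hT2⟩ := exists_spanning_tree H hHc
    have := hsd u T ⟨hT1.trans hHle, hT2⟩
    rcases this with h | ⟨w, hw, hadj⟩
    · exact hu h
    · have hHadj : H.Adj u w := hT1 hadj
      rcases hHadj.2 with he | ⟨he, _⟩
      · rw [Sym2.eq_iff] at he
        rcases he with ⟨-, rfl⟩ | ⟨he1, -⟩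
        · exact hv hw
        · exact (huv.ne he1).elim
      · exact he rfl
  · -- vertex cover → SD-set
    intro hvc x T ⟨hTle, hTtree⟩
    obtain ⟨b, hb⟩ := Fintype.exists_ne_of_one_lt_card (by omega) x
    obtain ⟨p⟩ := hTtree.isConnected.preconnected x b
    cases p with
    | nil => exact (hb rfl).elim
    | @cons _ c _ hadj q =>
      rcases hvc (hTle hadj) with h | h
      · exact Or.inl h
      · exact Or.inr ⟨c, h, hadj⟩
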